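/- For polynomial G(p) = Σ_{k=0}^h p^k Γ_k, the shifted block Loewner matrix 𝕃_s satisfies rank(𝕃_s) ≤ Σ_{k=0}^h rank(Γ_k)·rank(Ξ_{k+1}). -/

import Mathlib

open Matrix

section Aux

variable {α β γ δ : Type*} [Fintype α] [Fintype β] [Fintype γ] [Fintype δ]
variable [DecidableEq α] [DecidableEq β] [DecidableEq γ] [DecidableEq δ]

lemma matrix_rank_add_le (A B : Matrix α β ℝ) : (A + B).rank ≤ A.rank + B.rank := by
  have hr : LinearMap.range (A + B).mulVecLin ≤
      LinearMap.range A.mulVecLin ⊔ LinearMap.range B.mulVecLin := by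
    rw [Matrix.mulVecLin_add]
    rintro x ⟨v, rfl⟩
    exact Submodule.add_mem_sup ⟨v, rfl⟩ ⟨v, rfl⟩
  calc (A + B).rank ≤ Module.finrank ℝ
        ↥(LinearMap.range A.mulVecLin ⊔ LinearMap.range B.mulVecLin) :=
        Submodule.finrank_mono hr
    _ ≤ A.rank + B.rank := Submodule.finrank_add_le_finrank_add_finrank _ _

lemma matrix_rank_sum_le {ι : Type*} (s : Finset ι) (f : ι → Matrix α β ℝ) :
    (∑ k ∈ s, f k).rank ≤ ∑ k ∈ s, (f k).rank := by
  classical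
  induction s using Finset.induction_on with
  | empty => simp [Matrix.rank_zero]
  | insert _ _ hx ih =>
      rename_i a s
      rw [Finset.sum_insert hx, Finset.sum_insert hx]
      exact (matrix_rank_add_le _ _).trans (by omega)

lemma matrix_exists_factorization (A : Matrix α β ℝ) :
    ∃ (B : Matrix α (Fin A.rank) ℝ) (C : Matrix (Fin A.rank) β ℝ), A = B * C := by
  set f := A.mulVecLin with hf
  set R := LinearMap.range f with hRdef
  have hR : Module.finrank ℝ R = A.rank := rfl
  let e : R ≃ₗ[ℝ] (Fin A.rank → ℝ) := (Module.finBasisOfFinrankEq ℝ R hR).equivFun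
  refine ⟨LinearMap.toMatrix' (R.subtype ∘ₗ e.symm.toLinearMap),
    LinearMap.toMatrix' (e.toLinearMap ∘ₗ f.rangeRestrict), ?_⟩
  rw [← LinearMap.toMatrix'_comp]
  have hcomp : (R.subtype ∘ₗ e.symm.toLinearMap) ∘ₗ (e.toLinearMap ∘ₗ f.rangeRestrict) = f := by
    ext v
    simp
  rw [hcomp, hf, ← Matrix.toLin'_apply' A, LinearMap.toMatrix'_toLin']

lemma matrix_rank_hadamard_le (X : Matrix (α × γ) (β × δ) ℝ) (G : Matrix γ δ ℝ)
    (Y : Matrix (α × γ) (β × δ) ℝ) (hY : ∀ p q, Y p q = X p q * G p.2 q.2) :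
    Y.rank ≤ G.rank * X.rank := by
  obtain ⟨B, C, hBC⟩ := matrix_exists_factorization X
  obtain ⟨U, V, hUV⟩ := matrix_exists_factorization G
  have hfac : Y = (Matrix.of fun p (t : Fin X.rank × Fin G.rank) => B p t.1 * U p.2 t.2) *
      (Matrix.of fun (t : Fin X.rank × Fin G.rank) q => C t.1 q * V t.2 q.2) := by
    ext p q
    rw [hY, show X p q = (B * C) p q from by rw [← hBC],
      show G p.2 q.2 = (U * V) p.2 q.2 from by rw [← hUV]]
    simp only [Matrix.mul_apply, Matrix.of_apply, Fintype.sum_prod_type,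
      Finset.sum_mul_sum, Finset.mul_sum, Finset.sum_mul]
    rw [Finset.sum_comm]
    exact Finset.sum_congr rfl fun s _ => Finset.sum_congr rfl fun t _ => by ring
  rw [hfac]
  calc Matrix.rank _ ≤ Fintype.card (Fin X.rank × Fin G.rank) :=
        (Matrix.rank_mul_le_left _ _).trans (Matrix.rank_le_card_width _)
    _ = G.rank * X.rank := by simp [mul_comm]

end Aux

/-- For polynomial `G p = ∑_{k=0}^h p^k • Γ k`, the shifted block Loewner matrix `𝕃ₛ`
satisfies `rank 𝕃ₛ ≤ ∑_{k=0}^h rank (Γ k) * rank (Ξ (k+1))`, where `Ξ k` has `(i,j)`-th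
block `((π i ^ k - φ j ^ k) / (π i - φ j)) • 𝟙_{m,n}`. -/
theorem polynomial_shifted_loewner_rank_le (M N m n h : ℕ)
    (Γ : ℕ → Matrix (Fin m) (Fin n) ℝ) (π : Fin M → ℝ) (φ : Fin N → ℝ)
    (hπφ : ∀ i j, π i ≠ φ j)
    (Ls : Matrix (Fin M × Fin m) (Fin N × Fin n) ℝ)
    (Ξ : ℕ → Matrix (Fin M × Fin m) (Fin N × Fin n) ℝ)
    (hLs : ∀ i j a b, Ls (i, a) (j, b) =
      (π i - φ j)⁻¹ * ((π i • (∑ k ∈ Finset.range (h + 1), π i ^ k • Γ k)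
        - φ j • ∑ k ∈ Finset.range (h + 1), φ j ^ k • Γ k) a b))
    (hΞ : ∀ k i j a b, Ξ k (i, a) (j, b) = (π i ^ k - φ j ^ k) / (π i - φ j)) :
    Ls.rank ≤ ∑ k ∈ Finset.range (h + 1), (Γ k).rank * (Ξ (k + 1)).rank := by
  set D : ℕ → Matrix (Fin M × Fin m) (Fin N × Fin n) ℝ :=
    fun k => Matrix.of fun p q => Ξ (k + 1) p q * Γ k p.2 q.2 with hD
  have hsplit : Ls = ∑ k ∈ Finset.range (h + 1), D k := by
    ext ⟨i, a⟩ ⟨j, b⟩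
    have hne : π i - φ j ≠ 0 := sub_ne_zero.mpr (hπφ i j)
    rw [hLs i j a b]
    simp only [Matrix.sub_apply, Matrix.smul_apply, Matrix.sum_apply, smul_eq_mul,
      Finset.mul_sum, ← Finset.sum_sub_distrib, hD, Matrix.of_apply]
    refine Finset.sum_congr rfl fun k _ => ?_
    rw [hΞ (k + 1) i j a b]
    field_simp
    ring
  rw [hsplit]
  refine (matrix_rank_sum_le _ _).trans (Finset.sum_le_sum fun k _ => ?_)
  exact matrix_rank_hadamard_le (Ξ (k + 1)) (Γ k) (D k) (fun p q => rfl)
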